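/- arXiv:0910.1473 — 3 statements merged into one kernel-verified Lean document; each statement's English description precedes it below -/
import Mathlib

section
/- Let A be a nonempty bounded open subset of ℝ^d and h > 0. Then the function x ↦ vol(b(x,h) ∩ A), mapping a point to the Lebesgue volume of the intersection of the open ball of radius h around x with A, satisfies inf_{x ∈ A} vol(b(x,h) ∩ A) > 0. -/
open MeasureTheory

/-- For a nonempty bounded open set `A ⊆ ℝ^d` and `h > 0`, the volume of `b(x,h) ∩ A`
is bounded away from zero over `x ∈ A`. -/
theorem inf_volume_ball_inter_pos (d : ℕ)
    (A : Set (EuclideanSpace ℝ (Fin d))) (hA : IsOpen A)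
    (hAb : Bornology.IsBounded A) (hAne : A.Nonempty) (h : ℝ) (hh : 0 < h) :
    0 < ⨅ x : A, volume (Metric.ball (x : EuclideanSpace ℝ (Fin d)) h ∩ A) := by
  have hc : IsCompact (closure A) := hAb.isCompact_closure
  obtain ⟨t, ht⟩ := hc.elim_finite_subcover
    (fun y : closure A => Metric.ball (y : EuclideanSpace ℝ (Fin d)) (h/2))
    (fun y => Metric.isOpen_ball)
    (fun x hx => Set.mem_iUnion.2 ⟨⟨x, hx⟩, Metric.mem_ball_self (by linarith)⟩)
  set f : closure A → ENNReal :=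
    fun y => volume (Metric.ball (y : EuclideanSpace ℝ (Fin d)) (h/2) ∩ A) with hf
  have hpos : ∀ y : closure A, 0 < f y := by
    intro y
    have hne : (Metric.ball (y : EuclideanSpace ℝ (Fin d)) (h/2) ∩ A).Nonempty := by
      rcases Metric.mem_closure_iff.1 y.2 (h/2) (by linarith) with ⟨z, hz, hdz⟩
      exact ⟨z, Metric.mem_ball'.2 hdz, hz⟩
    exact (Metric.isOpen_ball.inter hA).measure_pos volume hne
  have hm : 0 < t.inf f := by
    rw [Finset.lt_inf_iff (by simp : (0 : ENNReal) < ⊤)]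
    exact fun y _ => hpos y
  refine lt_of_lt_of_le hm (le_iInf fun x => ?_)
  have hx : (x : EuclideanSpace ℝ (Fin d)) ∈ ⋃ i ∈ t, Metric.ball (i : EuclideanSpace ℝ (Fin d)) (h/2) :=
    ht (subset_closure x.2)
  rcases Set.mem_iUnion₂.1 hx with ⟨i, hit, hxi⟩
  refine le_trans (Finset.inf_le hit) (measure_mono (Set.inter_subset_inter_left A ?_))
  intro z hz
  have : dist z (x : EuclideanSpace ℝ (Fin d)) ≤
      dist z (i : EuclideanSpace ℝ (Fin d)) + dist (i : EuclideanSpace ℝ (Fin d)) x :=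
    dist_triangle _ _ _
  have hxi' := Metric.mem_ball.1 hxi
  have hzi := Metric.mem_ball.1 hz
  rw [dist_comm] at hxi'
  exact Metric.mem_ball.2 (by linarith)
end

section
/- For strictly positive constants a and c, ∫_0^c e^{a x} E_1(a x) dx = (γ + log(a c) + e^{a c} E_1(a c)) / a, where γ is the Euler–Mascheroni constant. -/
open MeasureTheory Real Filter Topology

/-- The exponential integral `E₁(x) = ∫_x^∞ e^{-u}/u du`. -/
noncomputable def expInt (x : ℝ) : ℝ := ∫ u in Set.Ioi x, Real.exp (-u) / u

namespace ExpIntAux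

open Set intervalIntegral

noncomputable abbrev g (u : ℝ) : ℝ := Real.exp (-u) / u

lemma g_meas : Measurable g :=
  (Real.measurable_exp.comp measurable_neg).div measurable_id

lemma g_integrableOn {x : ℝ} (hx : 0 < x) : IntegrableOn g (Ioi x) := by
  have h : IntegrableOn (fun u : ℝ => Real.exp (-(1:ℝ) * u)) (Ioi x) :=
    exp_neg_integrableOn_Ioi x one_pos
  have h' : IntegrableOn (fun u : ℝ => x⁻¹ * Real.exp (-(1:ℝ) * u)) (Ioi x) :=
    h.const_mul _
  refine h'.mono' g_meas.aestronglyMeasurable ?_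
  filter_upwards [ae_restrict_mem measurableSet_Ioi] with u hu
  have hux : x < u := hu
  have hu0 : 0 < u := hx.trans hux
  rw [Real.norm_eq_abs, abs_of_nonneg (by positivity : (0:ℝ) ≤ g u)]
  simp only [neg_one_mul, g]
  rw [div_le_iff₀ hu0, mul_comm x⁻¹, mul_assoc]
  have : (1:ℝ) ≤ x⁻¹ * u := by
    rw [← div_eq_inv_mul, le_div_iff₀ hx]
    simpa using hux.le
  nlinarith [Real.exp_pos (-u)]

lemma g_contAt {u : ℝ} (hu : u ≠ 0) : ContinuousAt g u :=
  ((Real.continuous_exp.comp continuous_neg).continuousAt).div continuousAt_id hu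

lemma g_intervalIntegrable {x y : ℝ} (hx : 0 < x) (hy : 0 < y) :
    IntervalIntegrable g volume x y := by
  refine (ContinuousOn.intervalIntegrable ?_)
  intro u hu
  have : 0 < u := by
    rcases le_total x y with h | h
    · rw [uIcc_of_le h] at hu; exact lt_of_lt_of_le hx hu.1
    · rw [uIcc_of_ge h] at hu; exact lt_of_lt_of_le hy hu.1
  exact (g_contAt this.ne').continuousWithinAt

lemma expInt_eq_add {p q : ℝ} (hp : 0 < p) (hpq : p ≤ q) :
    expInt p = expInt q + ∫ u in p..q, g u := by
  have hq : 0 < q := hp.trans_le hpq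
  rw [intervalIntegral.integral_of_le hpq]
  have hsplit : Ioc p q ∪ Ioi q = Ioi p := Ioc_union_Ioi_eq_Ioi hpq
  have h1 : IntegrableOn g (Ioc p q) := (g_integrableOn hp).mono Ioc_subset_Ioi_self le_rfl
  have h2 : IntegrableOn g (Ioi q) := g_integrableOn hq
  have := setIntegral_union (Ioc_disjoint_Ioi le_rfl) measurableSet_Ioi h1 h2 (f := g)
  rw [hsplit] at this
  rw [expInt, this, expInt]
  ring

lemma expInt_eq {b x : ℝ} (hb : 0 < b) (hx : 0 < x) :
    expInt x = expInt b - ∫ u in b..x, g u := by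
  rcases le_total b x with h | h
  · have := expInt_eq_add hb h
    linarith [this]
  · have := expInt_eq_add hx h
    rw [intervalIntegral.integral_symm] at this
    linarith [this]

lemma expInt_hasDerivAt {y : ℝ} (hy : 0 < y) :
    HasDerivAt expInt (-(Real.exp (-y) / y)) y := by
  have hy2 : 0 < y / 2 := half_pos hy
  have H : HasDerivAt (fun u => ∫ t in (y/2)..u, g t) (g y) y := by
    refine intervalIntegral.integral_hasDerivAt_right (g_intervalIntegrable hy2 hy) ?_
      (g_contAt hy.ne')
    exact g_meas.stronglyMeasurable.stronglyMeasurableAtFilter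
  have H' : HasDerivAt (fun u => expInt (y/2) - ∫ t in (y/2)..u, g t) (-(g y)) y :=
    H.const_sub _
  refine H'.congr_of_eventuallyEq ?_
  filter_upwards [eventually_gt_nhds hy] with u hu
  exact expInt_eq hy2 hu

lemma expInt_nonneg {x : ℝ} (hx : 0 < x) : 0 ≤ expInt x := by
  refine setIntegral_nonneg measurableSet_Ioi fun u hu => ?_
  have : 0 < u := hx.trans hu
  positivity

lemma expInt_le {y : ℝ} (hy : 0 < y) : expInt y ≤ expInt 1 + |Real.log y| := by
  rcases le_total y 1 with h | h
  · have key : expInt y = expInt 1 + ∫ u in y..1, g u := expInt_eq_add hy h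
    have hle : (∫ u in y..1, g u) ≤ ∫ u in y..1, u⁻¹ := by
      refine intervalIntegral.integral_mono_on h (g_intervalIntegrable hy one_pos) ?_ ?_
      · refine ContinuousOn.intervalIntegrable ?_
        intro u hu
        rw [uIcc_of_le h] at hu
        exact (continuousAt_inv₀ (hy.trans_le hu.1).ne').continuousWithinAt
      · intro u hu
        have hu0 : 0 < u := hy.trans_le hu.1
        rw [g, div_le_iff₀ hu0, inv_mul_cancel₀ hu0.ne']
        exact Real.exp_le_one_iff.mpr (by linarith)
    have hint : (∫ u in y..1, u⁻¹) = -Real.log y := by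
      rw [integral_inv (by
        intro hmem
        rw [uIcc_of_le h] at hmem
        exact absurd hmem.1 (not_le.mpr hy))]
      simp [Real.log_div one_ne_zero hy.ne']
    have habs : |Real.log y| = -Real.log y := by
      rw [abs_of_nonpos (Real.log_nonpos hy.le h)]
    linarith
  · have key : expInt 1 = expInt y + ∫ u in (1:ℝ)..y, g u := expInt_eq_add one_pos h
    have hnn : 0 ≤ ∫ u in (1:ℝ)..y, g u := by
      refine intervalIntegral.integral_nonneg h fun u hu => ?_
      have : (0:ℝ) < u := lt_of_lt_of_le one_pos hu.1
      positivity
    have : (0:ℝ) ≤ |Real.log y| := abs_nonneg _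
    linarith

lemma neg_gamma_integral :
    (∫ t in Ioi (0:ℝ), Real.log t * Real.exp (-t)) = -Real.eulerMascheroniConstant := by
  set J : ℝ := ∫ t in Ioi (0:ℝ), Real.log t * Real.exp (-t) with hJ
  have hC := Complex.hasDerivAt_GammaIntegral (s := 1) (by norm_num)
  have hD : (∫ t : ℝ in Ioi 0, (t:ℂ) ^ ((1:ℂ) - 1) * (Real.log t * Real.exp (-t))) = (J : ℂ) := by
    rw [show ((1:ℂ)-1) = 0 by ring]
    simp_rw [Complex.cpow_zero, one_mul, ← Complex.ofReal_mul]
    exact _root_.integral_ofReal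
  rw [hD] at hC
  have hre : HasDerivAt (fun x : ℝ => (Complex.GammaIntegral x).re) J 1 := by
    have := HasDerivAt.real_of_complex (z := (1:ℝ)) (by exact_mod_cast hC)
    simpa using this
  have heq : (fun x : ℝ => (Complex.GammaIntegral x).re) =ᶠ[𝓝 (1:ℝ)] Real.Gamma := by
    filter_upwards [eventually_gt_nhds (by norm_num : (0:ℝ) < 1)] with x hx
    rw [← Complex.Gamma_eq_integral (by simpa using hx), Complex.Gamma_ofReal]
    simp
  have hre' : HasDerivAt Real.Gamma J 1 := hre.congr_of_eventuallyEq heq.symm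
  have := hre'.unique Real.hasDerivAt_Gamma_one
  linarith

lemma integrableOn_log_mul_exp_Ioi :
    IntegrableOn (fun t : ℝ => Real.log t * Real.exp (-t)) (Ioi 1) := by
  have h2 : IntegrableOn (fun x : ℝ => Real.exp (-x) * x ^ ((2:ℝ) - 1)) (Ioi 0) :=
    Real.GammaIntegral_convergent two_pos
  refine Integrable.mono' (h2.mono_set (Ioi_subset_Ioi zero_le_one)) ?_ ?_
  ·  exact ((Real.measurable_log.mul (Real.measurable_exp.comp measurable_neg))).aestronglyMeasurable
  · filter_upwards [ae_restrict_mem measurableSet_Ioi] with t ht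
    have ht1 : (1:ℝ) < t := ht
    have ht0 : (0:ℝ) < t := one_pos.trans ht1
    have hlog : 0 ≤ Real.log t := Real.log_nonneg ht1.le
    rw [Real.norm_eq_abs, abs_of_nonneg (by positivity)]
    have : Real.log t ≤ t := (Real.log_le_sub_one_of_pos ht0).trans (by linarith)
    calc Real.log t * Real.exp (-t) ≤ t * Real.exp (-t) := by
          exact mul_le_mul_of_nonneg_right this (Real.exp_nonneg _)
      _ = Real.exp (-t) * t ^ ((2:ℝ) - 1) := by
          rw [show (2:ℝ)-1 = 1 by norm_num, Real.rpow_one]; ring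

lemma integral_Ioi_one_log_exp :
    (∫ t in Ioi (1:ℝ), Real.log t * Real.exp (-t)) = expInt 1 := by
  have hderiv : ∀ t ∈ Ici (1:ℝ), HasDerivAt (fun t : ℝ => -(Real.exp (-t) * Real.log t))
      (Real.log t * Real.exp (-t) - g t) t := by
    intro t ht
    have ht0 : (0:ℝ) < t := lt_of_lt_of_le one_pos ht
    have h1 : HasDerivAt (fun t : ℝ => Real.exp (-t)) (-Real.exp (-t)) t := by
      simpa [Function.comp_def] using ((Real.hasDerivAt_exp (-t)).comp t (hasDerivAt_neg t))
    have h2 : HasDerivAt Real.log t⁻¹ t := Real.hasDerivAt_log ht0.ne'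
    have := (h1.mul h2).neg
    refine this.congr_deriv ?_
    simp only [g]
    ring
  have hint : IntegrableOn (fun t : ℝ => Real.log t * Real.exp (-t) - g t) (Ioi 1) :=
    integrableOn_log_mul_exp_Ioi.sub (g_integrableOn one_pos)
  have htend : Tendsto (fun t : ℝ => -(Real.exp (-t) * Real.log t)) atTop (𝓝 0) := by
    have h := Real.tendsto_pow_mul_exp_neg_atTop_nhds_zero 1
    have h0 : Tendsto (fun t : ℝ => Real.exp (-t) * Real.log t) atTop (𝓝 0) := by
      refine squeeze_zero_norm' ?_ h
      filter_upwards [eventually_ge_atTop (1:ℝ)] with t ht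
      have ht0 : (0:ℝ) < t := lt_of_lt_of_le one_pos ht
      have hlog : 0 ≤ Real.log t := Real.log_nonneg ht
      have hle : Real.log t ≤ t := (Real.log_le_sub_one_of_pos ht0).trans (by linarith)
      rw [Real.norm_eq_abs, abs_of_nonneg (by positivity)]
      calc Real.exp (-t) * Real.log t ≤ Real.exp (-t) * t :=
            mul_le_mul_of_nonneg_left hle (Real.exp_nonneg _)
        _ = t ^ 1 * Real.exp (-t) := by ring
    simpa using h0.neg
  have key := integral_Ioi_of_hasDerivAt_of_tendsto' hderiv hint htend
  simp only [Real.log_one, mul_zero, neg_zero, sub_zero] at key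
  rw [MeasureTheory.integral_sub integrableOn_log_mul_exp_Ioi (g_integrableOn one_pos)] at key
  have : expInt 1 = ∫ t in Ioi (1:ℝ), g t := rfl
  rw [this]
  linarith [key]

noncomputable abbrev h (u : ℝ) : ℝ := (Real.exp (-u) - 1) / u

lemma h_intervalIntegrable {c : ℝ} (hc : 0 < c) : IntervalIntegrable h volume 0 c := by
  rw [intervalIntegrable_iff_integrableOn_Ioc_of_le hc.le]
  have hconst : IntegrableOn (fun _ : ℝ => (1:ℝ)) (Ioc (0:ℝ) c) :=
    integrableOn_const measure_Ioc_lt_top.ne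
  refine hconst.mono'
    (((Real.measurable_exp.comp measurable_neg).sub measurable_const).div measurable_id).aestronglyMeasurable ?_
  filter_upwards [ae_restrict_mem measurableSet_Ioc] with u hu
  have hu0 : 0 < u := hu.1
  rw [Real.norm_eq_abs, abs_div, abs_of_pos hu0, div_le_one hu0, abs_sub_comm,
    abs_of_nonneg (by simpa using Real.exp_le_one_iff.mpr (by linarith : -u ≤ 0))]
  have := Real.add_one_le_exp (-u)
  linarith

lemma integrableOn_log_Ioc {c : ℝ} (hc : 0 < c) : IntegrableOn Real.log (Ioc (0:ℝ) c) := by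
  have h1 : IntervalIntegrable (fun x : ℝ => x ^ (-(1/2) : ℝ)) volume 0 c :=
    intervalIntegral.intervalIntegrable_rpow' (by norm_num)
  rw [intervalIntegrable_iff_integrableOn_Ioc_of_le hc.le] at h1
  have h2 : IntervalIntegrable (fun x : ℝ => x) volume 0 c := intervalIntegrable_id
  rw [intervalIntegrable_iff_integrableOn_Ioc_of_le hc.le] at h2
  have hdom : IntegrableOn (fun x : ℝ => 2 * x ^ (-(1/2) : ℝ) + x) (Ioc (0:ℝ) c) :=
    (h1.const_mul 2).add h2
  refine hdom.mono' Real.measurable_log.aestronglyMeasurable ?_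
  filter_upwards [ae_restrict_mem measurableSet_Ioc] with x hx
  have hx0 : (0:ℝ) < x := hx.1
  have hrp : (0:ℝ) < x ^ (-(1/2):ℝ) := Real.rpow_pos_of_pos hx0 _
  rw [Real.norm_eq_abs]
  rcases le_total x 1 with hx1 | hx1
  · rw [abs_of_nonpos (Real.log_nonpos hx0.le hx1)]
    have h2' : Real.log (x ^ (-(1/2):ℝ)) = -(1/2) * Real.log x := Real.log_rpow hx0 _
    have h3 : Real.log (x ^ (-(1/2):ℝ)) ≤ x ^ (-(1/2):ℝ) - 1 :=
      Real.log_le_sub_one_of_pos hrp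
    nlinarith
  · rw [abs_of_nonneg (Real.log_nonneg hx1)]
    have := Real.log_le_sub_one_of_pos hx0
    linarith

lemma integrableOn_log_exp_Ioc :
    IntegrableOn (fun t : ℝ => Real.log t * Real.exp (-t)) (Ioc (0:ℝ) 1) := by
  refine (integrableOn_log_Ioc one_pos).abs.mono'
    ((Real.measurable_log.mul (Real.measurable_exp.comp measurable_neg)).aestronglyMeasurable) ?_
  filter_upwards [ae_restrict_mem measurableSet_Ioc] with t ht
  have ht0 : (0:ℝ) < t := ht.1
  rw [Real.norm_eq_abs, abs_mul]
  have h1 : Real.exp (-t) ≤ 1 := Real.exp_le_one_iff.mpr (by linarith)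
  have h2 : |Real.exp (-t)| ≤ 1 := by rwa [abs_of_pos (Real.exp_pos _)]
  nlinarith [abs_nonneg (Real.log t), abs_nonneg (Real.exp (-t))]

lemma logexp_intervalIntegrable :
    IntervalIntegrable (fun t : ℝ => Real.log t * Real.exp (-t)) volume 0 1 := by
  rw [intervalIntegrable_iff_integrableOn_Ioc_of_le zero_le_one]
  exact integrableOn_log_exp_Ioc

lemma integral_log_exp_eq_h :
    (∫ t in (0:ℝ)..1, Real.log t * Real.exp (-t)) = ∫ t in (0:ℝ)..1, h t := by
  have hderiv : ∀ t ∈ Ioo (0:ℝ) 1,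
      HasDerivAt (fun t : ℝ => (Real.exp (-t) - 1) * Real.log t)
        (h t - Real.log t * Real.exp (-t)) t := by
    intro t ht
    have ht0 : (0:ℝ) < t := ht.1
    have h1 : HasDerivAt (fun t : ℝ => Real.exp (-t) - 1) (-Real.exp (-t)) t := by
      simpa using ((Real.hasDerivAt_exp (-t)).comp t (hasDerivAt_neg t)).sub_const 1
    have h2 : HasDerivAt Real.log t⁻¹ t := Real.hasDerivAt_log ht0.ne'
    refine (h1.mul h2).congr_deriv ?_
    simp only [h]
    ring
  have hint : IntervalIntegrable (fun t : ℝ => h t - Real.log t * Real.exp (-t)) volume 0 1 :=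
    (h_intervalIntegrable one_pos).sub logexp_intervalIntegrable
  have htend0 : Tendsto (fun t : ℝ => (Real.exp (-t) - 1) * Real.log t) (𝓝[>] (0:ℝ)) (𝓝 0) := by
    have hbase : Tendsto (fun t : ℝ => Real.log t * t) (𝓝[>] (0:ℝ)) (𝓝 0) := by
      have := tendsto_log_mul_rpow_nhdsGT_zero one_pos
      refine this.congr' ?_
      filter_upwards [self_mem_nhdsWithin] with t (ht : (0:ℝ) < t)
      rw [Real.rpow_one]
    have habs : Tendsto (fun t : ℝ => |Real.log t * t|) (𝓝[>] (0:ℝ)) (𝓝 0) := by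
      simpa using hbase.abs
    refine squeeze_zero_norm' ?_ habs
    filter_upwards [self_mem_nhdsWithin] with t (ht : (0:ℝ) < t)
    rw [Real.norm_eq_abs, abs_mul, abs_mul, abs_of_pos ht]
    have h1 : Real.exp (-t) ≤ 1 := Real.exp_le_one_iff.mpr (by linarith)
    have h2 : |Real.exp (-t) - 1| ≤ t := by
      rw [abs_of_nonpos (by linarith)]
      have := Real.add_one_le_exp (-t)
      linarith
    have := abs_nonneg (Real.log t)
    calc |Real.exp (-t) - 1| * |Real.log t| ≤ t * |Real.log t| :=
          mul_le_mul_of_nonneg_right h2 this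
      _ = |Real.log t| * t := by ring
  have htend1 : Tendsto (fun t : ℝ => (Real.exp (-t) - 1) * Real.log t) (𝓝[<] (1:ℝ)) (𝓝 0) := by
    have hcont : ContinuousAt (fun t : ℝ => (Real.exp (-t) - 1) * Real.log t) 1 :=
      (((Real.continuous_exp.comp continuous_neg).sub continuous_const).continuousAt).mul
        (Real.continuousAt_log one_ne_zero)
    have h2 : Tendsto (fun t : ℝ => (Real.exp (-t) - 1) * Real.log t) (𝓝[<] (1:ℝ))
        (𝓝 ((Real.exp (-1) - 1) * Real.log 1)) :=
      hcont.tendsto.mono_left nhdsWithin_le_nhds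
    simpa using h2
  have key := intervalIntegral.integral_eq_sub_of_hasDerivAt_of_tendsto one_pos hderiv hint
    htend0 htend1
  rw [intervalIntegral.integral_sub (h_intervalIntegrable one_pos)
    logexp_intervalIntegrable] at key
  simp only [sub_zero] at key
  linarith

lemma key_const : expInt 1 + (∫ t in (0:ℝ)..1, h t) = -Real.eulerMascheroniConstant := by
  have hsplit : Ioc (0:ℝ) 1 ∪ Ioi 1 = Ioi 0 := Ioc_union_Ioi_eq_Ioi zero_le_one
  have h1 : IntegrableOn (fun t : ℝ => Real.log t * Real.exp (-t)) (Ioc (0:ℝ) 1) :=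
    integrableOn_log_exp_Ioc
  have h2 := integrableOn_log_mul_exp_Ioi
  have hu := setIntegral_union (Ioc_disjoint_Ioi le_rfl) measurableSet_Ioi h1 h2
    (f := fun t : ℝ => Real.log t * Real.exp (-t))
  rw [hsplit, neg_gamma_integral, integral_Ioi_one_log_exp] at hu
  have : (∫ t in Ioc (0:ℝ) 1, Real.log t * Real.exp (-t))
      = ∫ t in (0:ℝ)..1, Real.log t * Real.exp (-t) := by
    rw [intervalIntegral.integral_of_le zero_le_one]
  rw [this, integral_log_exp_eq_h] at hu
  linarith

lemma tendsto_expInt_add_log :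
    Tendsto (fun y : ℝ => expInt y + Real.log y) (𝓝[>] (0:ℝ))
      (𝓝 (-Real.eulerMascheroniConstant)) := by
  have hIio : IntegrableOn h (uIcc (0:ℝ) 1) := by
    rw [uIcc_of_le zero_le_one, integrableOn_Icc_iff_integrableOn_Ioc]
    have := h_intervalIntegrable one_pos
    rwa [intervalIntegrable_iff_integrableOn_Ioc_of_le zero_le_one] at this
  have hcont : ContinuousOn (fun y : ℝ => ∫ u in y..1, h u) (uIcc (0:ℝ) 1) :=
    intervalIntegral.continuousOn_primitive_interval_left hIio
  have hprim : Tendsto (fun y : ℝ => ∫ u in y..1, h u) (𝓝[>] (0:ℝ))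
      (𝓝 (∫ u in (0:ℝ)..1, h u)) := by
    have hc0 : ContinuousWithinAt (fun y : ℝ => ∫ u in y..1, h u) (Icc (0:ℝ) 1) 0 := by
      have := hcont 0 left_mem_uIcc
      rwa [uIcc_of_le zero_le_one] at this
    have hrw : 𝓝[>] (0:ℝ) = 𝓝[Ioc (0:ℝ) 1] 0 :=
      (nhdsWithin_Ioc_eq_nhdsGT one_pos).symm
    rw [hrw]
    exact hc0.tendsto.mono_left (nhdsWithin_mono _ Ioc_subset_Icc_self)
  have heq : ∀ᶠ y in 𝓝[>] (0:ℝ),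
      expInt 1 + (∫ u in y..1, h u) = expInt y + Real.log y := by
    filter_upwards [Ioc_mem_nhdsGT_of_mem (Set.left_mem_Ico.mpr one_pos)] with y hy
    obtain ⟨hy0, hy1⟩ := hy
    have e1 : expInt y = expInt 1 + ∫ u in y..1, g u := expInt_eq_add hy0 hy1
    have hinv : IntervalIntegrable (fun u : ℝ => u⁻¹) volume y 1 := by
      refine ContinuousOn.intervalIntegrable ?_
      intro u hu
      rw [uIcc_of_le hy1] at hu
      exact (continuousAt_inv₀ (hy0.trans_le hu.1).ne').continuousWithinAt
    have e2 : (∫ u in y..1, u⁻¹) = -Real.log y := by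
      rw [integral_inv (by
        intro hmem
        rw [uIcc_of_le hy1] at hmem
        exact absurd hmem.1 (not_le.mpr hy0))]
      simp [Real.log_div one_ne_zero hy0.ne']
    have e3 : (∫ u in y..1, h u) = (∫ u in y..1, g u) - (∫ u in y..1, u⁻¹) := by
      rw [← intervalIntegral.integral_sub (g_intervalIntegrable hy0 one_pos) hinv]
      refine intervalIntegral.integral_congr fun u hu => ?_
      rw [uIcc_of_le hy1] at hu
      have hu0 : (0:ℝ) < u := hy0.trans_le hu.1
      field_simp [h, g]
    rw [e1, e3, e2]
    ring
  have hlim : Tendsto (fun y : ℝ => expInt 1 + ∫ u in y..1, h u) (𝓝[>] (0:ℝ))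
      (𝓝 (expInt 1 + ∫ u in (0:ℝ)..1, h u)) := tendsto_const_nhds.add hprim
  rw [key_const] at hlim
  exact hlim.congr' heq

lemma tendsto_main :
    Tendsto (fun y : ℝ => Real.exp y * expInt y + Real.log y) (𝓝[>] (0:ℝ))
      (𝓝 (-Real.eulerMascheroniConstant)) := by
  have h2 : Tendsto (fun y : ℝ => (Real.exp y - 1) * expInt y) (𝓝[>] (0:ℝ)) (𝓝 0) := by
    have ha : Tendsto (fun y : ℝ => (Real.exp y - 1) * expInt 1) (𝓝[>] (0:ℝ)) (𝓝 0) := by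
      have hca : ContinuousAt (fun y : ℝ => (Real.exp y - 1) * expInt 1) 0 :=
        ((Real.continuous_exp.continuousAt).sub continuousAt_const).mul continuousAt_const
      have := hca.tendsto.mono_left (nhdsWithin_le_nhds (s := Ioi (0:ℝ)))
      simpa using this
    have hb : Tendsto (fun y : ℝ => (Real.exp y - 1) * |Real.log y|) (𝓝[>] (0:ℝ)) (𝓝 0) := by
      have hslope : Tendsto (fun y : ℝ => (Real.exp y - 1) / y) (𝓝[>] (0:ℝ)) (𝓝 1) := by
        have hd := Real.hasDerivAt_exp 0
        rw [hasDerivAt_iff_tendsto_slope] at hd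
        have := hd.mono_left (nhdsWithin_mono _ (fun y (hy : (0:ℝ) < y) => hy.ne'))
        rw [show Real.exp 0 = 1 from Real.exp_zero] at this
        refine this.congr' ?_
        filter_upwards [self_mem_nhdsWithin] with y (hy : (0:ℝ) < y)
        rw [slope_def_field, Real.exp_zero, sub_zero]
      have hylog : Tendsto (fun y : ℝ => y * |Real.log y|) (𝓝[>] (0:ℝ)) (𝓝 0) := by
        have habs : Tendsto (fun y : ℝ => |Real.log y * y|) (𝓝[>] (0:ℝ)) (𝓝 0) := by
          have := tendsto_log_mul_rpow_nhdsGT_zero one_pos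
          have h1 := this.abs
          simp only [abs_zero] at h1
          refine h1.congr' ?_
          filter_upwards [self_mem_nhdsWithin] with y (hy : (0:ℝ) < y)
          rw [Real.rpow_one]
        refine habs.congr' ?_
        filter_upwards [self_mem_nhdsWithin] with y (hy : (0:ℝ) < y)
        rw [abs_mul, abs_of_pos hy]
        ring
      have hmul := hslope.mul hylog
      rw [mul_zero] at hmul
      refine hmul.congr' ?_
      filter_upwards [self_mem_nhdsWithin] with y (hy : (0:ℝ) < y)
      field_simp
    have hub : Tendsto (fun y : ℝ => (Real.exp y - 1) * (expInt 1 + |Real.log y|))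
        (𝓝[>] (0:ℝ)) (𝓝 0) := by
      have := ha.add hb
      rw [add_zero] at this
      refine this.congr' ?_
      filter_upwards [self_mem_nhdsWithin] with y _
      ring
    refine squeeze_zero' ?_ ?_ hub
    · filter_upwards [self_mem_nhdsWithin] with y (hy : (0:ℝ) < y)
      have h1 : (0:ℝ) ≤ Real.exp y - 1 := by
        have := Real.add_one_le_exp y
        linarith
      exact mul_nonneg h1 (expInt_nonneg hy)
    · filter_upwards [self_mem_nhdsWithin] with y (hy : (0:ℝ) < y)
      have h1 : (0:ℝ) ≤ Real.exp y - 1 := by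
        have := Real.add_one_le_exp y
        linarith
      exact mul_le_mul_of_nonneg_left (expInt_le hy) h1
  have := tendsto_expInt_add_log.add h2
  rw [add_zero] at this
  refine this.congr' ?_
  filter_upwards [self_mem_nhdsWithin] with y _
  ring

end ExpIntAux

/-- For , ,
where  is the Euler–Mascheroni constant. -/
theorem integral_exp_mul_expInt (a c : ℝ) (ha : 0 < a) (hc : 0 < c) :
    ∫ x in (0:ℝ)..c, Real.exp (a * x) * expInt (a * x) =
      (Real.eulerMascheroniConstant + Real.log (a * c) +
        Real.exp (a * c) * expInt (a * c)) / a := by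
  set F : ℝ → ℝ := fun x => (Real.exp (a*x) * expInt (a*x) + Real.log (a*x)) / a with hF
  have key : ∀ x : ℝ, 0 < x → HasDerivAt F (Real.exp (a*x) * expInt (a*x)) x := by
    intro x hx
    have hax : 0 < a * x := mul_pos ha hx
    have hinner : HasDerivAt (fun y : ℝ => Real.exp y * expInt y + Real.log y)
        (Real.exp (a*x) * expInt (a*x)) (a*x) := by
      have h1 := (Real.hasDerivAt_exp (a*x)).mul (ExpIntAux.expInt_hasDerivAt hax)
      have h2 := Real.hasDerivAt_log hax.ne'
      have h3 := h1.add h2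
      refine h3.congr_deriv ?_
      have hexp : Real.exp (a*x) * (Real.exp (-(a*x)) / (a*x)) = (a*x)⁻¹ := by
        rw [← mul_div_assoc, ← Real.exp_add, add_neg_cancel, Real.exp_zero, one_div]
      rw [mul_neg, ← hexp]
      ring
    have hlin : HasDerivAt (fun x : ℝ => a * x) a x := by
      have := (hasDerivAt_id x).const_mul a
      rwa [mul_one] at this
    have hcomp := (hinner.comp x hlin).div_const a
    refine hcomp.congr_deriv ?_
    field_simp
  have hint : IntervalIntegrable (fun x => Real.exp (a*x) * expInt (a*x)) volume 0 c := by
    rw [intervalIntegrable_iff_integrableOn_Ioc_of_le hc.le]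
    have hconst : IntegrableOn (fun _ : ℝ => expInt 1 + |Real.log a|) (Set.Ioc (0:ℝ) c) :=
      integrableOn_const measure_Ioc_lt_top.ne
    have hdom : IntegrableOn
        (fun x : ℝ => Real.exp (a*c) * ((expInt 1 + |Real.log a|) + |Real.log x|))
        (Set.Ioc (0:ℝ) c) :=
      (hconst.add (ExpIntAux.integrableOn_log_Ioc hc).abs).const_mul _
    refine hdom.mono' ?_ ?_
    · refine ContinuousOn.aestronglyMeasurable ?_ measurableSet_Ioc
      intro x hx
      have hax : 0 < a * x := mul_pos ha hx.1
      have hc1 : ContinuousAt (fun x : ℝ => Real.exp (a*x)) x :=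
        (Real.continuous_exp.comp (continuous_const.mul continuous_id)).continuousAt
      have hc2 : ContinuousAt (fun x : ℝ => expInt (a*x)) x :=
        (ExpIntAux.expInt_hasDerivAt hax).continuousAt.comp
          ((continuous_const.mul continuous_id).continuousAt)
      exact (hc1.mul hc2).continuousWithinAt
    · filter_upwards [ae_restrict_mem measurableSet_Ioc] with x hx
      have hx0 : (0:ℝ) < x := hx.1
      have hax : 0 < a * x := mul_pos ha hx0
      have hEnn : 0 ≤ expInt (a*x) := ExpIntAux.expInt_nonneg hax
      have hexple : Real.exp (a*x) ≤ Real.exp (a*c) :=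
        Real.exp_le_exp.mpr (mul_le_mul_of_nonneg_left hx.2 ha.le)
      have hE : expInt (a*x) ≤ expInt 1 + |Real.log (a*x)| := ExpIntAux.expInt_le hax
      have hlog : |Real.log (a*x)| ≤ |Real.log a| + |Real.log x| := by
        rw [Real.log_mul ha.ne' hx0.ne']
        exact abs_add_le _ _
      rw [Real.norm_eq_abs, abs_of_nonneg (mul_nonneg (Real.exp_nonneg _) hEnn)]
      calc Real.exp (a*x) * expInt (a*x)
          ≤ Real.exp (a*c) * expInt (a*x) :=
            mul_le_mul_of_nonneg_right hexple hEnn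
        _ ≤ Real.exp (a*c) * ((expInt 1 + |Real.log a|) + |Real.log x|) := by
            refine mul_le_mul_of_nonneg_left ?_ (Real.exp_nonneg _)
            calc expInt (a*x) ≤ expInt 1 + |Real.log (a*x)| := hE
              _ ≤ expInt 1 + (|Real.log a| + |Real.log x|) := by linarith
              _ = (expInt 1 + |Real.log a|) + |Real.log x| := by ring
  have hscale : Tendsto (fun x : ℝ => a * x) (𝓝[>] (0:ℝ)) (𝓝[>] (0:ℝ)) := by
    rw [tendsto_nhdsWithin_iff]
    constructor
    · have : Tendsto (fun x : ℝ => a * x) (𝓝 (0:ℝ)) (𝓝 (a * 0)) :=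
        (continuous_const.mul continuous_id).tendsto 0
      rw [mul_zero] at this
      exact this.mono_left nhdsWithin_le_nhds
    · filter_upwards [self_mem_nhdsWithin] with x (hx : (0:ℝ) < x)
      exact mul_pos ha hx
  have htend0 : Tendsto F (𝓝[>] (0:ℝ)) (𝓝 (-Real.eulerMascheroniConstant / a)) :=
    (ExpIntAux.tendsto_main.comp hscale).div_const a
  have htendc : Tendsto F (𝓝[<] c) (𝓝 (F c)) :=
    (key c hc).continuousAt.tendsto.mono_left nhdsWithin_le_nhds
  have hmain := intervalIntegral.integral_eq_sub_of_hasDerivAt_of_tendsto hc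
    (fun x hx => key x hx.1) hint htend0 htendc
  rw [hmain, hF]
  field_simp
  ring
end

section
/- For λ > 0, ∫_{−∞}^0 ∫_0^∞ λ³ e^{λ t} e^{−λ s} / (s − t) dt ds = λ², where the inner variable t ranges over (−∞, 0) and s over (0, ∞). -/
open MeasureTheory Real

/-- `∫_0^∞ ∫_{-∞}^0 λ³ e^{λt} e^{-λs} / (s - t) dt ds = λ²`. -/
theorem double_integral_eq_sq (lam : ℝ) (hlam : 0 < lam) :
    ∫ s in Set.Ioi (0:ℝ), ∫ t in Set.Iio (0:ℝ),
        lam ^ 3 * Real.exp (lam * t) * Real.exp (-(lam * s)) / (s - t) = lam ^ 2 := by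
  set F : ℝ → ℝ := fun w => lam ^ 3 * Real.exp (-(lam * w)) / w with hFdef
  have hFmeas : Measurable F :=
    (measurable_const.mul (Real.measurable_exp.comp ((measurable_id.const_mul lam).neg))).div
      measurable_id
  -- the uncurried kernel on the positive quadrant
  set u : ℝ × ℝ → ℝ := fun p => if p.1 < p.2 then F p.2 else 0 with hudef
  have humeas : Measurable u :=
    Measurable.ite (measurableSet_lt measurable_fst measurable_snd)
      (hFmeas.comp measurable_snd) measurable_const
  -- Step A : inner integral via the substitution w = s - t
  have hA : ∀ s ∈ Set.Ioi (0:ℝ),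
      (∫ t in Set.Iio (0:ℝ), lam ^ 3 * Real.exp (lam * t) * Real.exp (-(lam * s)) / (s - t))
        = ∫ w in Set.Ioi s, F w := by
    intro s _
    have he : MeasurableEmbedding (fun t : ℝ => s - t) :=
      (MeasurableEquiv.subLeft s).measurableEmbedding
    have key : (∫ w in Set.Ioi s, F w)
        = ∫ t in Set.Iio (0:ℝ), lam ^ 3 * Real.exp (-(lam * (s - t))) / (s - t) := by
      conv_lhs => rw [show (volume : Measure ℝ) = Measure.map (fun t : ℝ => s - t) volume from
        (Measure.map_sub_left_eq_self volume s).symm]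
      rw [he.setIntegral_map, show (fun t : ℝ => s - t) ⁻¹' Set.Ioi s = Set.Iio 0 by
        ext t; simp only [Set.mem_preimage, Set.mem_Ioi, Set.mem_Iio]
        constructor <;> intro h <;> linarith]
    rw [key]
    refine setIntegral_congr_fun measurableSet_Iio (fun t _ => ?_) |>.symm
    rw [show -(lam * (s - t)) = lam * t + -(lam * s) by ring, Real.exp_add]
    ring
  -- Step B : rewrite ∫_{Ioi s} F as an integral over Ioi 0 with an indicator
  have hB : ∀ s ∈ Set.Ioi (0:ℝ),
      (∫ w in Set.Ioi s, F w) = ∫ w in Set.Ioi (0:ℝ), u (s, w) := by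
    intro s hs
    have : (fun w => u (s, w)) = Set.indicator (Set.Ioi s) F := by
      funext w
      by_cases h : s < w <;> simp [hudef, h, Set.indicator, Set.mem_Ioi]
    rw [this, integral_indicator measurableSet_Ioi, Measure.restrict_restrict measurableSet_Ioi,
      show Set.Ioi s ∩ Set.Ioi (0:ℝ) = Set.Ioi s by
        rw [Set.Ioi_inter_Ioi, sup_eq_left.mpr (le_of_lt hs)]]
  -- the inner s-integral computation (with values of the slice at fixed w > 0)
  have hslice : ∀ w : ℝ, (fun s => u (s, w)) = Set.indicator (Set.Iio w) (fun _ => F w) := by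
    intro w; funext s
    by_cases h : s < w <;> simp [hudef, h, Set.indicator, Set.mem_Iio]
  have hmeasIio : ∀ w : ℝ, volume.restrict (Set.Ioi (0:ℝ)) (Set.Iio w) = ENNReal.ofReal w := by
    intro w
    rw [Measure.restrict_apply measurableSet_Iio, Set.Iio_inter_Ioi, Real.volume_Ioo, sub_zero]
  -- integrability of u on the product of the two half-lines
  have hint : Integrable u ((volume.restrict (Set.Ioi (0:ℝ))).prod
      (volume.restrict (Set.Ioi (0:ℝ)))) := by
    rw [integrable_prod_iff' humeas.aestronglyMeasurable]
    constructor
    · refine Filter.Eventually.of_forall (fun w => ?_)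
      rw [hslice w]
      rw [integrable_indicator_iff measurableSet_Iio]
      refine (integrableOn_const_iff).mpr (Or.inr ?_)
      rw [hmeasIio w]
      exact ENNReal.ofReal_lt_top
    · have h0 : IntegrableOn (fun w => Real.exp (-lam * w)) (Set.Ioi (0:ℝ)) volume :=
        exp_neg_integrableOn_Ioi 0 hlam
      simp_rw [neg_mul] at h0
      have hg : Integrable (fun w => lam ^ 3 * Real.exp (-(lam * w)))
          (volume.restrict (Set.Ioi (0:ℝ))) := h0.const_mul (lam ^ 3)
      refine hg.congr ?_
      filter_upwards [ae_restrict_mem measurableSet_Ioi] with w hw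
      have hw0 : (0:ℝ) < w := hw
      have hFw : 0 ≤ F w := by
        apply div_nonneg _ hw0.le
        positivity
      have : (fun s => ‖u (s, w)‖) = Set.indicator (Set.Iio w) (fun _ => ‖F w‖) := by
        funext s
        by_cases h : s < w <;> simp [hudef, h, Set.indicator, Set.mem_Iio]
      rw [this, integral_indicator measurableSet_Iio, setIntegral_const, measureReal_def, hmeasIio w,
        ENNReal.toReal_ofReal hw0.le, smul_eq_mul, Real.norm_of_nonneg hFw, hFdef]
      field_simp
  -- put everything together
  calc (∫ s in Set.Ioi (0:ℝ), ∫ t in Set.Iio (0:ℝ),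
        lam ^ 3 * Real.exp (lam * t) * Real.exp (-(lam * s)) / (s - t))
      = ∫ s in Set.Ioi (0:ℝ), ∫ w in Set.Ioi (0:ℝ), u (s, w) := by
        refine setIntegral_congr_fun measurableSet_Ioi (fun s hs => ?_)
        rw [hA s hs, hB s hs]
    _ = ∫ w in Set.Ioi (0:ℝ), ∫ s in Set.Ioi (0:ℝ), u (s, w) :=
        integral_integral_swap hint
    _ = ∫ w in Set.Ioi (0:ℝ), lam ^ 3 * Real.exp (-(lam * w)) := by
        refine setIntegral_congr_fun measurableSet_Ioi (fun w hw => ?_)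
        have hw0 : (0:ℝ) < w := hw
        rw [hslice w, integral_indicator measurableSet_Iio, setIntegral_const, measureReal_def, hmeasIio w,
          ENNReal.toReal_ofReal hw0.le, smul_eq_mul, hFdef]
        field_simp
    _ = lam ^ 2 := by
        rw [MeasureTheory.integral_const_mul]
        have := integral_comp_mul_left_Ioi (fun x => Real.exp (-x)) 0 hlam
        simp only [mul_zero] at this
        rw [this, integral_exp_neg_Ioi, neg_zero, Real.exp_zero, smul_eq_mul, mul_one]
        field_simp
end
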